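/- (Structure of optimal transformations) Suppose a circuit C on V can be transformed into an AG-executable circuit using an initial mapping and exactly k inserted SWAP gates, and k is minimal. Then there exist s with 1 ≤ s ≤ k+1, a partition of C into s consecutive nonempty sections C₁,…,C_s, and permutations σ₁,…,σ_s on V such that σᵢ(Cᵢ) is an AG-circuit for every i and Σ_{i=2}^s ‖σᵢ ∘ σ_{i−1}⁻¹‖ = k. -/

import Mathlib

variable {V : Type*} [DecidableEq V]

/-- `L = [s₁,…,s_c]` is a list of swaps along edges of `G` implementing `π`,
i.e. each pair is an edge of `G` and `π = s_c ∘ ⋯ ∘ s₁`. -/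
def ImplementedBy (G : SimpleGraph V) (L : List (V × V)) (π : Equiv.Perm V) : Prop :=
  (∀ p ∈ L, G.Adj p.1 p.2) ∧ ((L.map fun p => Equiv.swap p.1 p.2).reverse).prod = π

/-- The swap cost of `π` on `G`: minimum number of edge-transpositions implementing `π`. -/
noncomputable def swapCost (G : SimpleGraph V) (π : Equiv.Perm V) : ℕ :=
  sInf {n | ∃ L : List (V × V), L.length = n ∧ ImplementedBy G L π}

inductive Gate (V : Type*) where
  | one : V → Gate V
  | two : V → V → Gate V

/-- A circuit is a finite list of 1- and 2-qubit gates. -/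
abbrev Circuit (V : Type*) := List (Gate V)

def permGate {V : Type*} (π : Equiv.Perm V) : Gate V → Gate V
  | .one q => .one (π q)
  | .two p q => .two (π p) (π q)

/-- The permuted circuit `π(C)`. -/
def permCircuit {V : Type*} (π : Equiv.Perm V) (C : Circuit V) : Circuit V :=
  C.map (permGate π)

/-- The interaction graph of a circuit. -/
def interactionGraph {V : Type*} (C : Circuit V) : SimpleGraph V where
  Adj p q := p ≠ q ∧ (Gate.two p q ∈ C ∨ Gate.two q p ∈ C)
  symm := ⟨fun p q h => ⟨h.1.symm, h.2.symm⟩⟩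
  loopless := ⟨fun p h => h.1 rfl⟩

/-- `C` is an `AG`-circuit: every 2-qubit gate acts on an edge of `AG`. -/
def IsAGCircuit {V : Type*} (AG : SimpleGraph V) (C : Circuit V) : Prop :=
  ∀ p q : V, Gate.two p q ∈ C → AG.Adj p q

/-- The (logical to physical) mapping current just after the swaps `S 0, …, S j` have been
applied, starting from initial mapping `τ`: each swap updates `σ` to `π_{i,j} ∘ σ`. -/
noncomputable def curMap (τ : Equiv.Perm V) (S : ℕ → List (V × V)) (j : ℕ) : Equiv.Perm V :=
  ((((List.range (j + 1)).flatMap S).map fun p => Equiv.swap p.1 p.2).reverse).prod * τ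

/-- A gate is executable under mapping `σ` on `AG`. -/
def GateExec {V : Type*} (AG : SimpleGraph V) (σ : Equiv.Perm V) : Gate V → Prop
  | .one _ => True
  | .two p q => AG.Adj (σ p) (σ q)

/-- `C` is transformed into an `AG`-executable circuit using initial mapping `τ` and,
for each gate position `j`, the SWAP gates `S j` (along edges of `AG`) inserted just
before gate `j`. -/
def ExecutableWith (AG : SimpleGraph V) (C : Circuit V) (τ : Equiv.Perm V)
    (S : ℕ → List (V × V)) : Prop :=
  (∀ j < C.length, ∀ p ∈ S j, AG.Adj p.1 p.2) ∧
  ∀ (j : ℕ) (h : j < C.length), GateExec AG (curMap τ S j) (C.get ⟨j, h⟩)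

/-- The number of SWAP gates inserted by the transformation. -/
def transSwapCount {V : Type*} (C : Circuit V) (S : ℕ → List (V × V)) : ℕ :=
  ∑ j ∈ Finset.range C.length, (S j).length

lemma curMap_succ (τ : Equiv.Perm V) (S : ℕ → List (V × V)) (j : ℕ) :
    curMap τ S (j + 1) =
      (((S (j + 1)).map fun p => Equiv.swap p.1 p.2).reverse).prod * curMap τ S j := by
  unfold curMap
  rw [List.range_succ, List.flatMap_append, List.map_append, List.reverse_append,
    List.prod_append, mul_assoc]
  simp

lemma curMap_congr (τ : Equiv.Perm V) (S : ℕ → List (V × V)) {a j : ℕ} (haj : a ≤ j)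
    (h : ∀ t, a < t → t ≤ j → S t = []) : curMap τ S j = curMap τ S a := by
  induction j with
  | zero => have : a = 0 := by omega
            rw [this]
  | succ j ih =>
      rcases Nat.lt_or_ge a (j+1) with hlt | hge
      · rw [curMap_succ, h (j+1) hlt le_rfl]
        simp only [List.map_nil, List.reverse_nil, List.prod_nil, one_mul]
        exact ih (by omega) (fun t ht1 ht2 => h t ht1 (by omega))
      · have : a = j + 1 := le_antisymm haj hge
        rw [this]

open Classical in
noncomputable def nextBp (n : ℕ) (S : ℕ → List (V × V)) (a : ℕ) : ℕ :=
  if h : ∃ t, a < t ∧ t < n ∧ S t ≠ [] then Nat.find h else n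

noncomputable def bp (n : ℕ) (S : ℕ → List (V × V)) : ℕ → ℕ
  | 0 => 0
  | i + 1 => nextBp n S (bp n S i)

lemma nextBp_le (n : ℕ) (S : ℕ → List (V × V)) (a : ℕ) : nextBp n S a ≤ n := by
  unfold nextBp; split
  · next h => exact le_of_lt (Nat.find_spec h).2.1
  · exact le_rfl

lemma lt_nextBp (n : ℕ) (S : ℕ → List (V × V)) {a : ℕ} (ha : a < n) : a < nextBp n S a := by
  unfold nextBp; split
  · next h => exact (Nat.find_spec h).1
  · exact ha

lemma nextBp_min (n : ℕ) (S : ℕ → List (V × V)) {a t : ℕ} (h1 : a < t) (h2 : t < n)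
    (h3 : S t ≠ []) : nextBp n S a ≤ t := by
  unfold nextBp; split
  · next h => exact Nat.find_le ⟨h1, h2, h3⟩
  · next h => exact absurd ⟨t, h1, h2, h3⟩ h

lemma nextBp_spec (n : ℕ) (S : ℕ → List (V × V)) {a : ℕ} (h : nextBp n S a < n) :
    a < nextBp n S a ∧ S (nextBp n S a) ≠ [] := by
  revert h
  unfold nextBp; split
  · next hh => intro _; exact ⟨(Nat.find_spec hh).1, (Nat.find_spec hh).2.2⟩
  · intro h; exact absurd h (lt_irrefl n)

lemma bp_le (n : ℕ) (S : ℕ → List (V × V)) (i : ℕ) : bp n S i ≤ n := by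
  induction i with
  | zero => exact Nat.zero_le n
  | succ i ih => exact nextBp_le n S _

lemma bp_lt_succ (n : ℕ) (S : ℕ → List (V × V)) {i : ℕ} (h : bp n S i < n) :
    bp n S i < bp n S (i + 1) := lt_nextBp n S h

lemma bp_mono (n : ℕ) (S : ℕ → List (V × V)) (i : ℕ) : bp n S i ≤ bp n S (i + 1) := by
  rcases Nat.lt_or_ge (bp n S i) n with h | h
  · exact le_of_lt (bp_lt_succ n S h)
  · show bp n S i ≤ nextBp n S (bp n S i)
    rcases Nat.lt_or_ge (nextBp n S (bp n S i)) n with h' | h'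
    · exact le_of_lt (nextBp_spec n S h').1
    · have h1 := bp_le n S i
      omega

lemma bp_mono' (n : ℕ) (S : ℕ → List (V × V)) {i j : ℕ} (h : i ≤ j) : bp n S i ≤ bp n S j := by
  induction j with
  | zero => have : i = 0 := by omega
            rw [this]
  | succ j ih =>
      rcases Nat.lt_or_ge i (j+1) with hl | hg
      · exact le_trans (ih (by omega)) (bp_mono n S j)
      · have : i = j + 1 := by omega
        rw [this]

lemma bp_eventually (n : ℕ) (S : ℕ → List (V × V)) : ∃ i, bp n S i = n := by
  refine ⟨n, le_antisymm (bp_le n S n) ?_⟩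
  have key : ∀ i, bp n S i = n ∨ i ≤ bp n S i := by
    intro i
    induction i with
    | zero => right; exact Nat.zero_le 0
    | succ i ih =>
        rcases ih with h | h
        · left
          have h1 := bp_mono n S i
          have h2 := bp_le n S (i+1)
          omega
        · rcases Nat.lt_or_ge (bp n S i) n with hl | hg
          · right; have := bp_lt_succ n S hl; omega
          · left
            have h1 := bp_le n S i
            have h2 := bp_mono n S i
            have h3 := bp_le n S (i+1)
            omega
  rcases key n with h | h
  · omega
  · exact h

lemma flatMap_sections {α : Type*} (L : List α) (d : ℕ → ℕ) :
    ∀ s : ℕ, (∀ i, d i ≤ d (i + 1)) → d 0 = 0 →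
      (List.range s).flatMap (fun i => (L.take (d (i + 1))).drop (d i)) = L.take (d s)
  | 0, _, h0 => by simp [h0]
  | s + 1, hm, h0 => by
      rw [List.range_succ, List.flatMap_append,
        flatMap_sections L d s hm h0]
      simp only [List.flatMap_cons, List.flatMap_nil, List.append_nil]
      conv_rhs => rw [← List.take_append_drop (d s) (L.take (d (s + 1)))]
      rw [List.take_take, min_eq_left (hm s)]


theorem optimal_transformation_structure [Fintype V] (AG : SimpleGraph V)
    (hAG : AG.Connected) (C : Circuit V) (hC : C ≠ [])
    (τ : Equiv.Perm V) (S : ℕ → List (V × V)) (k : ℕ)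
    (hexec : ExecutableWith AG C τ S) (hk : transSwapCount C S = k)
    (hmin : ∀ (τ' : Equiv.Perm V) (S' : ℕ → List (V × V)),
      ExecutableWith AG C τ' S' → k ≤ transSwapCount C S') :
    ∃ s : ℕ, 1 ≤ s ∧ s ≤ k + 1 ∧
      ∃ (Cs : ℕ → Circuit V) (σ : ℕ → Equiv.Perm V),
        (∀ i < s, Cs i ≠ []) ∧
        C = (List.range s).flatMap Cs ∧
        (∀ i < s, IsAGCircuit AG (permCircuit (σ i) (Cs i))) ∧
        ∑ i ∈ Finset.Ico 1 s, swapCost AG (σ i * (σ (i - 1))⁻¹) = k := by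
  classical
  set n := C.length with hn
  have hn0 : 0 < n := by rw [hn]; exact List.length_pos_iff.mpr hC
  set d : ℕ → ℕ := bp n S with hd
  have hd0 : d 0 = 0 := rfl
  have hdsucc : ∀ i, d (i + 1) = nextBp n S (d i) := fun i => rfl
  have hev := bp_eventually n S
  set s := Nat.find hev with hsdef
  have hds : d s = n := Nat.find_spec hev
  have hdlt : ∀ i < s, d i < n := fun i hi =>
    lt_of_le_of_ne (bp_le n S i) (Nat.find_min hev hi)
  have hs1 : 1 ≤ s := by
    by_contra h
    have hs0 : s = 0 := by omega
    rw [hs0] at hds; rw [hd0] at hds; omega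
  have hmono : ∀ i, d i ≤ d (i + 1) := bp_mono n S
  have hmono' : ∀ {i j : ℕ}, i ≤ j → d i ≤ d j := fun h => bp_mono' n S h
  have hdle : ∀ i, d i ≤ n := bp_le n S
  have hstrict : ∀ {a b : ℕ}, a < b → b ≤ s → d a < d b := by
    intro a b hab hbs
    have h1 : d a < d (a + 1) := bp_lt_succ n S (hdlt a (by omega))
    exact lt_of_lt_of_le h1 (hmono' hab)
  have hinj : ∀ {a b : ℕ}, a ≤ s → b ≤ s → d a = d b → a = b := by
    intro a b ha hb h
    by_contra hne
    rcases Nat.lt_or_ge a b with hl | hg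
    · exact absurd h (ne_of_lt (hstrict hl hb))
    · have : b < a := by omega
      exact absurd h.symm (ne_of_lt (hstrict this ha))
  have hbrk : ∀ i, i + 1 < s → d i < d (i + 1) ∧ S (d (i + 1)) ≠ [] := by
    intro i hi
    have h1 : d (i + 1) < n := hdlt _ hi
    rw [hdsucc i] at h1 ⊢
    exact nextBp_spec n S h1
  -- constant mapping on each section
  have sec : ∀ i, i < s → ∀ j, d i ≤ j → j < d (i + 1) → curMap τ S j = curMap τ S (d i) := by
    intro i hi j h1 h2
    apply curMap_congr τ S h1
    intro t ht1 ht2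
    by_contra hne
    have htn : t < n := lt_of_le_of_lt ht2 (lt_of_lt_of_le h2 (hdle (i + 1)))
    have hle := nextBp_min n S ht1 htn hne
    rw [← hdsucc i] at hle
    omega
  -- the swaps at breakpoint i+1 implement the relative permutation
  have himpl : ∀ i, i + 1 < s →
      ImplementedBy AG (S (d (i + 1))) (curMap τ S (d (i + 1)) * (curMap τ S (d i))⁻¹) := by
    intro i hi
    refine ⟨hexec.1 (d (i + 1)) (hdlt _ hi), ?_⟩
    obtain ⟨m, hm⟩ : ∃ m, d (i + 1) = m + 1 := by
      have := (hbrk i hi).1; exact ⟨d (i + 1) - 1, by omega⟩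
    have hstep := curMap_succ τ S m
    have hcm : curMap τ S m = curMap τ S (d i) := by
      apply sec i (by omega) m (by have := (hbrk i hi).1; omega) (by omega)
    rw [hcm, ← hm] at hstep
    rw [hstep, mul_inv_cancel_right]
  have cost_le : ∀ i, i + 1 < s →
      swapCost AG (curMap τ S (d (i + 1)) * (curMap τ S (d i))⁻¹) ≤ (S (d (i + 1))).length :=
    fun i hi => Nat.sInf_le ⟨S (d (i + 1)), rfl, himpl i hi⟩
  have hopt : ∀ i, i + 1 < s → ∃ L : List (V × V),
      L.length = swapCost AG (curMap τ S (d (i + 1)) * (curMap τ S (d i))⁻¹) ∧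
      ImplementedBy AG L (curMap τ S (d (i + 1)) * (curMap τ S (d i))⁻¹) := by
    intro i hi
    have : swapCost AG (curMap τ S (d (i + 1)) * (curMap τ S (d i))⁻¹) ∈
        {n | ∃ L : List (V × V), L.length = n ∧
          ImplementedBy AG L (curMap τ S (d (i + 1)) * (curMap τ S (d i))⁻¹)} :=
      Nat.sInf_mem ⟨(S (d (i + 1))).length, S (d (i + 1)), rfl, himpl i hi⟩
    obtain ⟨L, hL1, hL2⟩ := this
    exact ⟨L, hL1, hL2⟩
  choose! L hL1 hL2 using hopt
  set S' : ℕ → List (V × V) :=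
    fun j => if h : ∃ i, i + 1 < s ∧ d (i + 1) = j then L h.choose else [] with hS'
  have hS'at : ∀ i, i + 1 < s → S' (d (i + 1)) = L i := by
    intro i hi
    have hex : ∃ i', i' + 1 < s ∧ d (i' + 1) = d (i + 1) := ⟨i, hi, rfl⟩
    simp only [hS', dif_pos hex]
    have h1 := hex.choose_spec
    have h2 : hex.choose + 1 = i + 1 := hinj (le_of_lt h1.1) (le_of_lt hi) h1.2
    rw [show hex.choose = i by omega]
  have hS'empty : ∀ i, i < s → ∀ t, d i < t → t < d (i + 1) → S' t = [] := by
    intro i hi t h1 h2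
    simp only [hS']
    rw [dif_neg]
    rintro ⟨i', hi', he⟩
    have hii : i < i' + 1 := by
      by_contra hc
      push_neg at hc
      have := hmono' hc
      omega
    have : d (i + 1) ≤ d (i' + 1) := hmono' hii
    omega
  have hS'0 : S' 0 = [] := by
    simp only [hS']
    rw [dif_neg]
    rintro ⟨i', hi', he⟩
    have : d 0 < d (i' + 1) := hstrict (by omega) (by omega)
    omega
  -- the new transformation reproduces the section maps
  have base : ∀ i, i < s → curMap (curMap τ S 0) S' (d i) = curMap τ S (d i) := by
    intro i
    induction i with
    | zero =>
        intro _
        rw [hd0]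
        unfold curMap
        simp [List.range_succ, hS'0]
    | succ i ih =>
        intro hi
        obtain ⟨m, hm⟩ : ∃ m, d (i + 1) = m + 1 := by
          have := (hbrk i hi).1; exact ⟨d (i + 1) - 1, by omega⟩
        have hstep := curMap_succ (curMap τ S 0) S' m
        have hcm : curMap (curMap τ S 0) S' m = curMap (curMap τ S 0) S' (d i) := by
          apply curMap_congr _ _ (by have := (hbrk i hi).1; omega)
          intro t ht1 ht2
          exact hS'empty i (by omega) t ht1 (by omega)
        rw [hcm, ih (by omega), ← hm, hS'at i hi, (hL2 i hi).2] at hstep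
        rw [hstep, inv_mul_cancel_right]
  have sec' : ∀ i, i < s → ∀ j, d i ≤ j → j < d (i + 1) →
      curMap (curMap τ S 0) S' j = curMap τ S (d i) := by
    intro i hi j h1 h2
    rw [← base i hi]
    apply curMap_congr _ _ h1
    intro t ht1 ht2
    exact hS'empty i hi t ht1 (by omega)
  have hfind : ∀ j, j < n → ∃ i, i < s ∧ d i ≤ j ∧ j < d (i + 1) := by
    intro j hj
    have hex : ∃ i, j < d i := ⟨s, by rw [hds]; exact hj⟩
    have h0 : ¬ j < d 0 := by rw [hd0]; omega
    have hpos : 1 ≤ Nat.find hex := by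
      rcases Nat.eq_zero_or_pos (Nat.find hex) with h | h
      · exact absurd (h ▸ Nat.find_spec hex) h0
      · exact h
    obtain ⟨i, hieq⟩ : ∃ i, Nat.find hex = i + 1 := ⟨Nat.find hex - 1, by omega⟩
    have hile : Nat.find hex ≤ s := Nat.find_le (by rw [hds]; exact hj)
    refine ⟨i, by omega, ?_, by rw [← hieq]; exact Nat.find_spec hex⟩
    have := Nat.find_min hex (show i < Nat.find hex by omega)
    omega
  have hexec' : ExecutableWith AG C (curMap τ S 0) S' := by
    constructor
    · intro j hj p hp
      by_cases hcase : ∃ i, i + 1 < s ∧ d (i + 1) = j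
      · have hSj : S' j = L hcase.choose := by simp only [hS', dif_pos hcase]
        rw [hSj] at hp
        exact (hL2 _ hcase.choose_spec.1).1 p hp
      · have hSj : S' j = [] := by simp only [hS', dif_neg hcase]
        rw [hSj] at hp
        exact absurd hp List.not_mem_nil
    · intro j hj
      obtain ⟨i, his, h1, h2⟩ := hfind j hj
      rw [sec' i his j h1 h2, ← sec i his j h1 h2]
      exact hexec.2 j hj
  -- counting
  have himg : (Finset.Ico 1 s).image d ⊆ Finset.range n := by
    intro j hj
    rw [Finset.mem_image] at hj
    obtain ⟨i, hi, rfl⟩ := hj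
    rw [Finset.mem_Ico] at hi
    exact Finset.mem_range.mpr (hdlt i hi.2)
  have hinj' : ∀ a ∈ Finset.Ico 1 s, ∀ b ∈ Finset.Ico 1 s, d a = d b → a = b := by
    intro a ha b hb hab
    rw [Finset.mem_Ico] at ha hb
    exact hinj (le_of_lt ha.2) (le_of_lt hb.2) hab
  have hcount' : transSwapCount C S' =
      ∑ i ∈ Finset.Ico 1 s, swapCost AG (curMap τ S (d i) * (curMap τ S (d (i - 1)))⁻¹) := by
    unfold transSwapCount
    rw [← hn]
    rw [← Finset.sum_subset himg]
    · rw [Finset.sum_image hinj']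
      apply Finset.sum_congr rfl
      intro i hi
      rw [Finset.mem_Ico] at hi
      obtain ⟨i', rfl⟩ : ∃ i', i = i' + 1 := ⟨i - 1, by omega⟩
      rw [hS'at i' hi.2, hL1 i' hi.2]
      simp
    · intro j hj hnj
      have : S' j = [] := by
        simp only [hS']
        rw [dif_neg]
        rintro ⟨i, hi, rfl⟩
        exact hnj (Finset.mem_image.mpr ⟨i + 1, Finset.mem_Ico.mpr ⟨by omega, hi⟩, rfl⟩)
      simp [this]
  have hcost_sum_le : ∑ i ∈ Finset.Ico 1 s,
      swapCost AG (curMap τ S (d i) * (curMap τ S (d (i - 1)))⁻¹) ≤ k := by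
    have h1 : ∑ i ∈ Finset.Ico 1 s,
        swapCost AG (curMap τ S (d i) * (curMap τ S (d (i - 1)))⁻¹) ≤
        ∑ i ∈ Finset.Ico 1 s, (S (d i)).length := by
      apply Finset.sum_le_sum
      intro i hi
      rw [Finset.mem_Ico] at hi
      obtain ⟨i', rfl⟩ : ∃ i', i = i' + 1 := ⟨i - 1, by omega⟩
      simpa using cost_le i' hi.2
    have h2 : ∑ i ∈ Finset.Ico 1 s, (S (d i)).length =
        ∑ j ∈ (Finset.Ico 1 s).image d, (S j).length := (Finset.sum_image (f := fun j => (S j).length) hinj').symm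
    have h3 : ∑ j ∈ (Finset.Ico 1 s).image d, (S j).length ≤
        ∑ j ∈ Finset.range n, (S j).length :=
      Finset.sum_le_sum_of_subset himg
    have h4 : ∑ j ∈ Finset.range n, (S j).length = k := by
      rw [← hk]; unfold transSwapCount; rw [← hn]
    omega
  have hsum : ∑ i ∈ Finset.Ico 1 s,
      swapCost AG (curMap τ S (d i) * (curMap τ S (d (i - 1)))⁻¹) = k := by
    have := hmin (curMap τ S 0) S' hexec'
    rw [hcount'] at this
    omega
  have hsk : s ≤ k + 1 := by
    have h1 : ∀ i ∈ Finset.Ico 1 s, 1 ≤ (S (d i)).length := by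
      intro i hi
      rw [Finset.mem_Ico] at hi
      obtain ⟨i', rfl⟩ : ∃ i', i = i' + 1 := ⟨i - 1, by omega⟩
      have := (hbrk i' hi.2).2
      exact List.length_pos_iff.mpr this
    have h2 : (Finset.Ico 1 s).card • 1 ≤ ∑ i ∈ Finset.Ico 1 s, (S (d i)).length :=
      Finset.card_nsmul_le_sum _ _ _ h1
    rw [Nat.card_Ico, smul_eq_mul, mul_one] at h2
    have h3 : ∑ i ∈ Finset.Ico 1 s, (S (d i)).length =
        ∑ j ∈ (Finset.Ico 1 s).image d, (S j).length := (Finset.sum_image (f := fun j => (S j).length) hinj').symm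
    have h4 : ∑ j ∈ (Finset.Ico 1 s).image d, (S j).length ≤
        ∑ j ∈ Finset.range n, (S j).length :=
      Finset.sum_le_sum_of_subset himg
    have h5 : ∑ j ∈ Finset.range n, (S j).length = k := by
      rw [← hk]; unfold transSwapCount; rw [← hn]
    omega
  refine ⟨s, hs1, hsk, fun i => (C.take (d (i + 1))).drop (d i),
    fun i => curMap τ S (d i), ?_, ?_, ?_, hsum⟩
  · -- nonempty sections
    intro i hi
    rw [← List.length_pos_iff]
    rw [List.length_drop, List.length_take]
    have h1 : d i < d (i + 1) := hstrict (by omega) (by omega)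
    have h2 : d (i + 1) ≤ n := hdle (i + 1)
    rw [← hn]
    omega
  · -- decomposition
    rw [flatMap_sections C d s hmono hd0, hds, hn, List.take_length]
  · -- AG-circuit sections
    intro i hi p q hpq
    unfold permCircuit at hpq
    rw [List.mem_map] at hpq
    obtain ⟨g, hg, hpg⟩ := hpq
    cases g with
    | one a => simp [permGate] at hpg
    | two a b =>
        have hab : curMap τ S (d i) a = p ∧ curMap τ S (d i) b = q := by
          simpa [permGate] using hpg
        rw [List.mem_iff_getElem] at hg
        obtain ⟨j, hjlen, hgeq⟩ := hg
        rw [List.length_drop, List.length_take, ← hn] at hjlen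
        have h2 : d (i + 1) ≤ n := hdle (i + 1)
        have hidx : d i + j < n := by omega
        have hidx2 : d i + j < d (i + 1) := by omega
        rw [List.getElem_drop, List.getElem_take] at hgeq
        have hge := hexec.2 (d i + j) hidx
        rw [sec i hi (d i + j) (by omega) hidx2] at hge
        rw [← hab.1, ← hab.2]
        have : C.get ⟨d i + j, hidx⟩ = Gate.two a b := by
          rw [List.get_eq_getElem]; exact hgeq
        rw [this] at hge
        exact hge
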